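/- Let 0 < a < 1, b a natural number with a·b ≥ 1, and N ≥ 1 a natural number. The supremum, over all f of the form f(x) = ∑_{n=N}^{∞} a^{n/2}(c_n cos(bⁿπx) + d_n sin(bⁿπx)) with square-summable coefficients satisfying ∑_{n=N}^{∞} (c_n² + d_n²) ≤ 1, of the sup norm sup_{x∈[−1,1]} |f(x)| equals (a^N/(1 − a))^{1/2}. Equivalently, ‖I_W P_𝒱^N‖² = a^N/(1 − a). -/

import Mathlib

open Real

lemma ws_cos_sin_bound (θ c d : ℝ) :
    |c * Real.cos θ + d * Real.sin θ| ≤ Real.sqrt (c ^ 2 + d ^ 2) := by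
  have h := Real.sin_sq_add_cos_sq θ
  have h2 : (c * Real.cos θ + d * Real.sin θ) ^ 2 ≤ c ^ 2 + d ^ 2 := by
    nlinarith [sq_nonneg (c * Real.sin θ - d * Real.cos θ)]
  calc |c * Real.cos θ + d * Real.sin θ|
      = Real.sqrt ((c * Real.cos θ + d * Real.sin θ) ^ 2) := (Real.sqrt_sq_eq_abs _).symm
    _ ≤ Real.sqrt (c ^ 2 + d ^ 2) := Real.sqrt_le_sqrt h2

lemma ws_rpow_sq (a : ℝ) (ha : 0 < a) (n : ℕ) : (a ^ ((n:ℝ)/2)) ^ 2 = a ^ n := by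
  rw [← Real.rpow_natCast (a ^ ((n:ℝ)/2)) 2, ← Real.rpow_mul ha.le]
  norm_num

lemma ws_sqrt_eq (a : ℝ) (ha0 : 0 < a) (ha1 : a < 1) (N : ℕ) :
    Real.sqrt (a ^ N / (1 - a)) = Real.sqrt (1 - a) * a ^ ((N:ℝ)/2) * (1 - a)⁻¹ := by
  have h1a : (0:ℝ) < 1 - a := by linarith
  have hsa : Real.sqrt (a ^ N) = a ^ ((N:ℝ)/2) := by
    rw [← Real.rpow_natCast a N, Real.sqrt_eq_rpow, ← Real.rpow_mul ha0.le]
    ring_nf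
  have hs1 : Real.sqrt (1 - a) ^ 2 = 1 - a := Real.sq_sqrt h1a.le
  have hs1pos : 0 < Real.sqrt (1 - a) := Real.sqrt_pos.mpr h1a
  rw [Real.sqrt_div (by positivity) _, hsa]
  field_simp
  linear_combination (-1) * hs1

lemma ws_key_bound (a : ℝ) (b : ℕ) (ha0 : 0 < a) (ha1 : a < 1) (N : ℕ)
    (c d : ℕ → ℝ) (hs : Summable (fun n => c n ^ 2 + d n ^ 2))
    (hz : ∀ n < N, c n = 0 ∧ d n = 0)
    (h1 : (∑' n : ℕ, (c n ^ 2 + d n ^ 2)) ≤ 1) (x : ℝ) :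
    Summable (fun n : ℕ => a ^ ((n : ℝ) / 2) *
      (c n * Real.cos ((b : ℝ) ^ n * π * x) + d n * Real.sin ((b : ℝ) ^ n * π * x))) ∧
    |∑' n : ℕ, a ^ ((n : ℝ) / 2) *
      (c n * Real.cos ((b : ℝ) ^ n * π * x) + d n * Real.sin ((b : ℝ) ^ n * π * x))| ≤
      Real.sqrt (a ^ N / (1 - a)) := by
  have h1a : (0:ℝ) < 1 - a := by linarith
  set M := Real.sqrt (a ^ N / (1 - a)) with hMdef
  have hMpos : 0 < M := Real.sqrt_pos.mpr (div_pos (pow_pos ha0 N) h1a)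
  have hM2 : M ^ 2 = a ^ N / (1 - a) := Real.sq_sqrt (by positivity)
  set F : ℕ → ℝ := fun n => a ^ ((n : ℝ) / 2) *
      (c n * Real.cos ((b : ℝ) ^ n * π * x) + d n * Real.sin ((b : ℝ) ^ n * π * x)) with hF
  set G : ℕ → ℝ := fun n =>
      if n < N then 0 else (a ^ n / M + M * (c n ^ 2 + d n ^ 2)) / 2 with hG
  have hsnn : ∀ n : ℕ, 0 ≤ c n ^ 2 + d n ^ 2 := fun n => by positivity
  have hGnn : ∀ n, 0 ≤ G n := by
    intro n; simp only [hG]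
    split
    · exact le_refl _
    · positivity
  have hFG : ∀ n, |F n| ≤ G n := by
    intro n
    simp only [hF, hG]
    split
    · rename_i h
      obtain ⟨hc, hd⟩ := hz n h
      simp [hc, hd]
    · set p := a ^ ((n:ℝ)/2) with hp
      set q := Real.sqrt (c n ^ 2 + d n ^ 2) with hq
      have hpnn : 0 ≤ p := Real.rpow_nonneg ha0.le _
      have hp2 : p ^ 2 = a ^ n := ws_rpow_sq a ha0 n
      have hq2 : q ^ 2 = c n ^ 2 + d n ^ 2 := Real.sq_sqrt (hsnn n)
      have hqnn : 0 ≤ q := Real.sqrt_nonneg _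
      rw [abs_mul, abs_of_nonneg hpnn]
      have step1 : p * |c n * Real.cos ((b:ℝ)^n * π * x) + d n * Real.sin ((b:ℝ)^n * π * x)| ≤
          p * q := mul_le_mul_of_nonneg_left (ws_cos_sin_bound _ _ _) hpnn
      have key : 2 * M * (p * q) ≤ p ^ 2 + M ^ 2 * q ^ 2 := by nlinarith [sq_nonneg (p - M * q)]
      have step2 : p * q ≤ (a ^ n / M + M * (c n ^ 2 + d n ^ 2)) / 2 := by
        rw [← hp2, ← hq2, le_div_iff₀ (by norm_num : (0:ℝ) < 2), ← sub_nonneg]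
        have heq : p ^ 2 / M + M * q ^ 2 - p * q * 2 =
            (p ^ 2 + M ^ 2 * q ^ 2 - 2 * M * (p * q)) / M := by
          field_simp
        rw [heq]
        exact div_nonneg (by linarith) hMpos.le
      linarith
  have hGsum : Summable G := by
    have hH : Summable (fun n : ℕ => (a ^ n / M + M * (c n ^ 2 + d n ^ 2)) / 2) :=
      (((summable_geometric_of_lt_one ha0.le ha1).div_const M).add (hs.mul_left M)).div_const 2
    refine Summable.of_nonneg_of_le hGnn (fun n => ?_) hH
    simp only [hG]
    split
    · positivity
    · exact le_refl _
  have hFabs : Summable (fun n => |F n|) :=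
    Summable.of_nonneg_of_le (fun n => abs_nonneg _) hFG hGsum
  have hFsum : Summable F := hFabs.of_abs
  have htail_s : ∑' k : ℕ, (c (k + N) ^ 2 + d (k + N) ^ 2) ≤ 1 := by
    have hsplit := Summable.sum_add_tsum_nat_add N hs
    have hfin : 0 ≤ ∑ i ∈ Finset.range N, (c i ^ 2 + d i ^ 2) :=
      Finset.sum_nonneg fun i _ => hsnn i
    linarith
  have h0 : ∑ i ∈ Finset.range N, G i = 0 :=
    Finset.sum_eq_zero fun i hi => by simp [hG, Finset.mem_range.mp hi]
  have hA : Summable (fun k : ℕ => a ^ (k + N) / M) := by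
    simp_rw [pow_add]
    exact ((summable_geometric_of_lt_one ha0.le ha1).mul_right _).div_const M
  have hB : Summable (fun k : ℕ => M * (c (k + N) ^ 2 + d (k + N) ^ 2)) :=
    ((summable_nat_add_iff N).mpr hs).mul_left M
  have hGtail : ∀ k : ℕ, G (k + N) =
      (a ^ (k + N) / M + M * (c (k + N) ^ 2 + d (k + N) ^ 2)) / 2 := by
    intro k; simp only [hG]; rw [if_neg (by omega)]
  have hAval : ∑' k : ℕ, a ^ (k + N) / M = (a ^ N / (1 - a)) / M := by
    have : (fun k : ℕ => a ^ (k + N) / M) = fun k : ℕ => a ^ k * (a ^ N / M) := by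
      funext k; rw [pow_add]; ring
    rw [this, tsum_mul_right, tsum_geometric_of_lt_one ha0.le ha1]
    field_simp
  have hGval : ∑' n, G n ≤ M := by
    have hsplit := Summable.sum_add_tsum_nat_add N hGsum
    have hTeq : ∑' k : ℕ, G (k + N) =
        ((∑' k : ℕ, a ^ (k + N) / M) + ∑' k : ℕ, M * (c (k + N) ^ 2 + d (k + N) ^ 2)) / 2 := by
      rw [← Summable.tsum_add hA hB, ← tsum_div_const]
      exact tsum_congr hGtail
    have hBval : ∑' k : ℕ, M * (c (k + N) ^ 2 + d (k + N) ^ 2) ≤ M * 1 := by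
      rw [tsum_mul_left]
      exact mul_le_mul_of_nonneg_left htail_s hMpos.le
    have hfin : (a ^ N / (1 - a)) / M = M := by
      rw [← hM2, pow_two, mul_div_assoc, div_self hMpos.ne', mul_one]
    rw [← hsplit, h0, zero_add, hTeq, hAval, hfin]
    linarith
  refine ⟨hFsum, ?_⟩
  calc |∑' n, F n| ≤ ∑' n, |F n| := by
        have := norm_tsum_le_tsum_norm (f := F) (by simpa [Real.norm_eq_abs] using hFabs)
        simpa [Real.norm_eq_abs] using this
    _ ≤ ∑' n, G n := Summable.tsum_le_tsum hFG hFabs hGsum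
    _ ≤ M := hGval

/-- For `0 < a < 1`, `b : ℕ` with `a * b ≥ 1` and `N ≥ 1`, the supremum of
the sup norms over `[-1,1]` of the functions
`f(x) = ∑_{n=N}^∞ a^(n/2)(cₙ cos(bⁿπx) + dₙ sin(bⁿπx))` with square-summable coefficients
satisfying `∑_{n=N}^∞ (cₙ² + dₙ²) ≤ 1` equals `(a^N/(1 - a))^(1/2)`; that is,
`‖I_W P_𝒱^N‖² = a^N/(1 - a)`. -/
theorem weierstrass_projection_norm_tail
    (a : ℝ) (b : ℕ) (ha0 : 0 < a) (ha1 : a < 1) (hab : 1 ≤ a * b) (N : ℕ) (hN : 1 ≤ N) :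
    sSup {y : ℝ | ∃ c d : ℕ → ℝ, Summable (fun n => c n ^ 2 + d n ^ 2) ∧
        (∀ n < N, c n = 0 ∧ d n = 0) ∧
        (∑' n : ℕ, (c n ^ 2 + d n ^ 2)) ≤ 1 ∧
        y = ⨆ x : Set.Icc (-1 : ℝ) 1,
          |∑' n : ℕ, a ^ ((n : ℝ) / 2) *
            (c n * Real.cos ((b : ℝ) ^ n * π * (x : ℝ)) +
              d n * Real.sin ((b : ℝ) ^ n * π * (x : ℝ)))|} =
      Real.sqrt (a ^ N / (1 - a)) := by
  have h1a : (0:ℝ) < 1 - a := by linarith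
  set M := Real.sqrt (a ^ N / (1 - a)) with hMdef
  haveI : Nonempty (Set.Icc (-1:ℝ) 1) := ⟨⟨0, by norm_num⟩⟩
  -- the extremal element
  set c0 : ℕ → ℝ := fun n => if n < N then 0 else Real.sqrt (1 - a) * a ^ (((n:ℝ) - N)/2)
    with hc0
  set d0 : ℕ → ℝ := fun _ => 0 with hd0
  have hz0 : ∀ n < N, c0 n = 0 ∧ d0 n = 0 := fun n hn => ⟨by simp [hc0, hn], rfl⟩
  have hc0sq_shift : (fun k : ℕ => c0 (k + N) ^ 2 + d0 (k + N) ^ 2) =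
      fun k : ℕ => (1 - a) * a ^ k := by
    funext k
    simp only [hc0, hd0]
    rw [if_neg (by omega)]
    have hcast : (((k + N : ℕ):ℝ) - N)/2 = (k:ℝ)/2 := by push_cast; ring
    rw [hcast, mul_pow, Real.sq_sqrt h1a.le, ws_rpow_sq a ha0 k]
    norm_num
  have hs0 : Summable (fun n => c0 n ^ 2 + d0 n ^ 2) := by
    refine (summable_nat_add_iff N).mp ?_
    rw [hc0sq_shift]
    exact (summable_geometric_of_lt_one ha0.le ha1).mul_left _
  have hsum1 : (∑' n : ℕ, (c0 n ^ 2 + d0 n ^ 2)) ≤ 1 := by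
    have hsplit := Summable.sum_add_tsum_nat_add N hs0
    have h0 : ∑ i ∈ Finset.range N, (c0 i ^ 2 + d0 i ^ 2) = 0 :=
      Finset.sum_eq_zero fun i hi => by
        simp [hc0, hd0, Finset.mem_range.mp hi]
    have htail : ∑' k : ℕ, (c0 (k + N) ^ 2 + d0 (k + N) ^ 2) = 1 := by
      rw [hc0sq_shift, tsum_mul_left, tsum_geometric_of_lt_one ha0.le ha1,
        mul_inv_cancel₀ h1a.ne']
    rw [← hsplit, h0, zero_add, htail]
  -- value at x = 0 is M
  have hF0shift : (fun k : ℕ => a ^ (((k + N : ℕ):ℝ)/2) * c0 (k + N)) =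
      fun k : ℕ => Real.sqrt (1 - a) * a ^ ((N:ℝ)/2) * a ^ k := by
    funext k
    simp only [hc0]
    rw [if_neg (by omega)]
    have hcast : (((k + N : ℕ):ℝ) - N)/2 = (k:ℝ)/2 := by push_cast; ring
    have e1 : a ^ (((k + N : ℕ):ℝ)/2) = a ^ ((k:ℝ)/2) * a ^ ((N:ℝ)/2) := by
      rw [← Real.rpow_add ha0]; congr 1; push_cast; ring
    rw [hcast, e1]
    have hsq := ws_rpow_sq a ha0 k
    linear_combination (Real.sqrt (1 - a) * a ^ ((N:ℝ)/2)) * hsq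
  have hF0sum : Summable (fun n : ℕ => a ^ ((n:ℝ)/2) * c0 n) := by
    refine (summable_nat_add_iff N).mp ?_
    rw [hF0shift]
    exact (summable_geometric_of_lt_one ha0.le ha1).mul_left _
  have hF0val : ∑' n : ℕ, a ^ ((n:ℝ)/2) * c0 n = M := by
    have hsplit := Summable.sum_add_tsum_nat_add N hF0sum
    have h0 : ∑ i ∈ Finset.range N, a ^ ((i:ℝ)/2) * c0 i = 0 :=
      Finset.sum_eq_zero fun i hi => by
        simp [hc0, Finset.mem_range.mp hi]
    have htail : ∑' k : ℕ, a ^ (((k + N : ℕ):ℝ)/2) * c0 (k + N) =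
        Real.sqrt (1 - a) * a ^ ((N:ℝ)/2) * (1 - a)⁻¹ := by
      rw [hF0shift, tsum_mul_left, tsum_geometric_of_lt_one ha0.le ha1]
    rw [← hsplit, h0, zero_add, htail, hMdef, ws_sqrt_eq a ha0 ha1 N]
  -- the function associated with c0, d0
  set f : Set.Icc (-1:ℝ) 1 → ℝ := fun x =>
    |∑' n : ℕ, a ^ ((n : ℝ) / 2) *
      (c0 n * Real.cos ((b : ℝ) ^ n * π * (x : ℝ)) +
        d0 n * Real.sin ((b : ℝ) ^ n * π * (x : ℝ)))| with hf
  have hub0 : ∀ x : Set.Icc (-1:ℝ) 1, f x ≤ M := fun x =>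
    (ws_key_bound a b ha0 ha1 N c0 d0 hs0 hz0 hsum1 x).2
  have hx0 : f ⟨0, by norm_num⟩ = M := by
    have : (fun n : ℕ => a ^ ((n : ℝ) / 2) *
        (c0 n * Real.cos ((b : ℝ) ^ n * π * (0 : ℝ)) +
          d0 n * Real.sin ((b : ℝ) ^ n * π * (0 : ℝ)))) =
        fun n : ℕ => a ^ ((n:ℝ)/2) * c0 n := by
      funext n
      simp [hd0]
    simp only [hf]
    rw [this, hF0val]
    exact abs_of_nonneg (Real.sqrt_nonneg _)
  have hMpos : 0 < M := Real.sqrt_pos.mpr (div_pos (pow_pos ha0 N) h1a)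
  have hbdd : BddAbove (Set.range f) := ⟨M, by rintro _ ⟨x, rfl⟩; exact hub0 x⟩
  have hciSup : (⨆ x : Set.Icc (-1:ℝ) 1, f x) = M := by
    refine le_antisymm (ciSup_le hub0) ?_
    rw [← hx0]
    exact le_ciSup hbdd _
  have hmem : M ∈ {y : ℝ | ∃ c d : ℕ → ℝ, Summable (fun n => c n ^ 2 + d n ^ 2) ∧
      (∀ n < N, c n = 0 ∧ d n = 0) ∧
      (∑' n : ℕ, (c n ^ 2 + d n ^ 2)) ≤ 1 ∧
      y = ⨆ x : Set.Icc (-1 : ℝ) 1,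
        |∑' n : ℕ, a ^ ((n : ℝ) / 2) *
          (c n * Real.cos ((b : ℝ) ^ n * π * (x : ℝ)) +
            d n * Real.sin ((b : ℝ) ^ n * π * (x : ℝ)))|} :=
    ⟨c0, d0, hs0, hz0, hsum1, hciSup.symm⟩
  refine le_antisymm (csSup_le ⟨M, hmem⟩ ?_) (le_csSup ⟨M, ?_⟩ hmem)
  · rintro y ⟨c, d, hs, hz, h1, rfl⟩
    exact ciSup_le fun x => (ws_key_bound a b ha0 ha1 N c d hs hz h1 x).2
  · rintro y ⟨c, d, hs, hz, h1, rfl⟩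
    exact ciSup_le fun x => (ws_key_bound a b ha0 ha1 N c d hs hz h1 x).2
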